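/- Every subset C of ℂ² ∖ {0} that is closed in the subspace topology of ℂ² ∖ {0}, invariant under scalar multiplication by ℂˣ, and invariant under the action of SL(2,ℝ) (i.e. g ⋅ v ∈ C for all g ∈ SL(2,ℝ), v ∈ C) is preconnected. -/
import Mathlib


open Matrix

/-- The action of a real `2×2` matrix on `ℂ²`: map the entries into `ℂ`
and take matrix–vector multiplication. -/
noncomputable def actR (g : Matrix (Fin 2) (Fin 2) ℝ) (v : Fin 2 → ℂ) : Fin 2 → ℂ :=
  (g.map (Complex.ofReal ·)) *ᵥ v

/-- Every subset of `ℂ² ∖ {0}` that is closed in the subspace topology,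
`ℂˣ`-stable and `SL(2,ℝ)`-stable is preconnected (Corollary 2.3 for a
noncompact or real simple root). -/
theorem closed_sl2R_invariant_preconnected (C : Set (Fin 2 → ℂ))
    (hC0 : C ⊆ {v : Fin 2 → ℂ | v ≠ 0})
    (hclosed : IsClosed ((Subtype.val ⁻¹' C) : Set {v : Fin 2 → ℂ // v ≠ 0}))
    (hscal : ∀ (l : ℂˣ), ∀ v ∈ C, (l : ℂ) • v ∈ C)
    (hsl : ∀ (g : Matrix.SpecialLinearGroup (Fin 2) ℝ), ∀ v ∈ C,
        actR (g : Matrix (Fin 2) (Fin 2) ℝ) v ∈ C) :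
    IsPreconnected C := by
  rcases C.eq_empty_or_nonempty with h | ⟨v0, hv0⟩
  · rw [h]; exact isPreconnected_empty
  -- explicit formula for the action
  have hact : ∀ (a b c d : ℝ) (v : Fin 2 → ℂ),
      actR !![a, b; c, d] v = ![(a:ℂ) * v 0 + (b:ℂ) * v 1, (c:ℂ) * v 0 + (d:ℂ) * v 1] := by
    intro a b c d v
    funext i
    fin_cases i <;>
      simp [actR, Matrix.mulVec, dotProduct, Fin.sum_univ_two, Matrix.map_apply]
  have hscal' : ∀ c : ℂ, c ≠ 0 → ∀ v ∈ C, c • v ∈ C := fun c hc v hv =>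
    hscal (Units.mk0 c hc) v hv
  -- diagonal action: stretch the first coordinate by any positive real
  have hdiag : ∀ z : ℂ, (![z, 1] : Fin 2 → ℂ) ∈ C → ∀ t : ℝ, 0 < t →
      (![(t:ℂ) * z, 1] : Fin 2 → ℂ) ∈ C := by
    intro z hz t ht
    set s := Real.sqrt t with hs_def
    have hs0 : s ≠ 0 := ne_of_gt (Real.sqrt_pos.mpr ht)
    have hss : s * s = t := Real.mul_self_sqrt ht.le
    have hdet : (!![s, 0; 0, s⁻¹] : Matrix (Fin 2) (Fin 2) ℝ).det = 1 := by
      simp [Matrix.det_fin_two_of, mul_inv_cancel₀ hs0]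
    have h1 := hsl ⟨!![s, 0; 0, s⁻¹], hdet⟩ _ hz
    rw [show ((⟨!![s, 0; 0, s⁻¹], hdet⟩ : Matrix.SpecialLinearGroup (Fin 2) ℝ) :
        Matrix (Fin 2) (Fin 2) ℝ) = !![s, 0; 0, s⁻¹] from rfl, hact] at h1
    have h2 := hscal' (s : ℂ) (by exact_mod_cast hs0) _ h1
    convert h2 using 1
    funext i
    have hsC : ((s:ℂ)) ≠ 0 := by exact_mod_cast hs0
    have hts : ((t:ℂ)) = (s:ℂ) * (s:ℂ) := by rw [← hss]; push_cast; ring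
    fin_cases i
    · simp [hts]
      ring
    · simp [mul_inv_cancel₀ hsC]
  -- rotations
  have hrot : ∀ θ : ℝ, (![(1:ℂ), 0] : Fin 2 → ℂ) ∈ C →
      (![(Real.cos θ : ℂ), (Real.sin θ : ℂ)] : Fin 2 → ℂ) ∈ C := by
    intro θ h1
    have hdet : (!![Real.cos θ, -Real.sin θ; Real.sin θ, Real.cos θ]
        : Matrix (Fin 2) (Fin 2) ℝ).det = 1 := by
      simp [Matrix.det_fin_two_of]
      rw [← Real.cos_sq_add_sin_sq θ]
      ring
    have h2 := hsl ⟨_, hdet⟩ _ h1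
    rw [show ((⟨_, hdet⟩ : Matrix.SpecialLinearGroup (Fin 2) ℝ) :
        Matrix (Fin 2) (Fin 2) ℝ) = !![Real.cos θ, -Real.sin θ; Real.sin θ, Real.cos θ]
        from rfl, hact] at h2
    convert h2 using 1
    funext i
    fin_cases i <;> simp
  -- normalization lemmas
  have hnorm : ∀ y ∈ C, y 1 ≠ 0 → (![(y 1)⁻¹ * y 0, 1] : Fin 2 → ℂ) ∈ C := by
    intro y hy hy1
    have h := hscal' (y 1)⁻¹ (inv_ne_zero hy1) y hy
    convert h using 1
    funext i
    fin_cases i <;> simp [inv_mul_cancel₀ hy1]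
  have hnorm0 : ∀ y ∈ C, y 1 = 0 → (![(1:ℂ), 0] : Fin 2 → ℂ) ∈ C := by
    intro y hy hy1
    have hy0 : y 0 ≠ 0 := by
      intro h0
      apply hC0 hy
      funext i
      fin_cases i <;> simp [h0, hy1]
    have h := hscal' (y 0)⁻¹ (inv_ne_zero hy0) y hy
    convert h using 1
    funext i
    fin_cases i <;> simp [inv_mul_cancel₀ hy0, hy1]
  -- the key limit point (0,1) is in C
  have h01 : (![(0:ℂ), 1] : Fin 2 → ℂ) ∈ C := by
    by_cases hy1 : v0 1 = 0
    · -- rotate (1,0) to (0,1)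
      have h1 := hnorm0 v0 hv0 hy1
      have hdet : (!![(0:ℝ), -1; 1, 0] : Matrix (Fin 2) (Fin 2) ℝ).det = 1 := by
        simp [Matrix.det_fin_two_of]
      have h2 := hsl ⟨_, hdet⟩ _ h1
      rw [show ((⟨_, hdet⟩ : Matrix.SpecialLinearGroup (Fin 2) ℝ) :
          Matrix (Fin 2) (Fin 2) ℝ) = !![(0:ℝ), -1; 1, 0] from rfl, hact] at h2
      convert h2 using 1
      funext i
      fin_cases i <;> simp
    · set z := (v0 1)⁻¹ * v0 0 with hz_def
      have hw : (![z, 1] : Fin 2 → ℂ) ∈ C := hnorm v0 hv0 hy1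
      -- sequence (1/(n+1)) * z → 0
      have hne : ∀ w : Fin 2 → ℂ, w 1 = 1 → w ≠ 0 := by
        intro w hw1 h
        have := congrFun h 1
        rw [hw1] at this
        simp at this
      set u : ℕ → {v : Fin 2 → ℂ // v ≠ 0} := fun n =>
        ⟨![((1 / (n + 1) : ℝ) : ℂ) * z, 1], hne _ rfl⟩ with hu_def
      have hmem : ∀ n, u n ∈ (Subtype.val ⁻¹' C : Set {v : Fin 2 → ℂ // v ≠ 0}) := by
        intro n
        exact hdiag z hw _ (by positivity)
      have htend : Filter.Tendsto u Filter.atTop (nhds ⟨![(0:ℂ), 1], hne _ rfl⟩) := by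
        rw [tendsto_subtype_rng]
        rw [tendsto_pi_nhds]
        intro i
        fin_cases i
        · simp only [hu_def]
          have : Filter.Tendsto (fun n : ℕ => ((1 / (n + 1) : ℝ) : ℂ) * z)
              Filter.atTop (nhds ((0 : ℂ) * z)) := by
            apply Filter.Tendsto.mul_const
            rw [show ((0:ℂ)) = ((0:ℝ):ℂ) by norm_num]
            exact (Complex.continuous_ofReal.tendsto 0).comp
              tendsto_one_div_add_atTop_nhds_zero_nat
          simpa using this
        · simp [hu_def]
      have := hclosed.mem_of_tendsto htend (Filter.Eventually.of_forall hmem)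
      exact this
  -- main argument
  apply isPreconnected_of_forall (![(0:ℂ), 1] : Fin 2 → ℂ)
  intro y hy
  -- the ℂˣ-orbit of y
  set O : Set (Fin 2 → ℂ) := (fun c : ℂ => c • y) '' {(0:ℂ)}ᶜ with hO_def
  have hOsub : O ⊆ C := by
    rintro - ⟨c, hc, rfl⟩
    exact hscal' c hc y hy
  have hOconn : IsPreconnected O :=
    ((isConnected_compl_singleton_of_one_lt_rank
        (by rw [Complex.rank_real_complex]; norm_num) (0:ℂ)).isPreconnected).image _
      ((continuous_id.smul continuous_const).continuousOn)
  have hyO : y ∈ O := ⟨1, by simp, one_smul ℂ y⟩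
  by_cases hy1 : y 1 = 0
  · -- connect through the arc of rotations
    have h10 : (![(1:ℂ), 0] : Fin 2 → ℂ) ∈ C := hnorm0 y hy hy1
    set A : Set (Fin 2 → ℂ) :=
      (fun θ : ℝ => (![(Real.cos θ : ℂ), (Real.sin θ : ℂ)] : Fin 2 → ℂ)) ''
        Set.Icc 0 (Real.pi / 2) with hA_def
    have hAsub : A ⊆ C := by
      rintro - ⟨θ, -, rfl⟩
      exact hrot θ h10
    have hAconn : IsPreconnected A := by
      apply (isPreconnected_Icc).image
      apply Continuous.continuousOn
      apply continuous_pi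
      intro i
      fin_cases i
      · exact Complex.continuous_ofReal.comp Real.continuous_cos
      · exact Complex.continuous_ofReal.comp Real.continuous_sin
    have h10O : (![(1:ℂ), 0] : Fin 2 → ℂ) ∈ O := by
      have hy0 : y 0 ≠ 0 := by
        intro h0
        apply hC0 hy
        funext i
        fin_cases i <;> simp [h0, hy1]
      refine ⟨(y 0)⁻¹, by simpa using inv_ne_zero hy0, ?_⟩
      funext i
      fin_cases i <;> simp [inv_mul_cancel₀ hy0, hy1]
    have h10A : (![(1:ℂ), 0] : Fin 2 → ℂ) ∈ A :=
      ⟨0, ⟨le_refl 0, by positivity⟩, by simp⟩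
    have h01A : (![(0:ℂ), 1] : Fin 2 → ℂ) ∈ A :=
      ⟨Real.pi / 2, ⟨by positivity, le_refl _⟩, by simp⟩
    exact ⟨O ∪ A, Set.union_subset hOsub hAsub, Or.inr h01A, Or.inl hyO,
      IsPreconnected.union _ h10O h10A hOconn hAconn⟩
  · -- connect through the segment
    set z := (y 1)⁻¹ * y 0 with hz_def
    have hw : (![z, 1] : Fin 2 → ℂ) ∈ C := hnorm y hy hy1
    set A : Set (Fin 2 → ℂ) :=
      (fun t : ℝ => (![(t:ℂ) * z, 1] : Fin 2 → ℂ)) '' Set.Icc 0 1 with hA_def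
    have hAsub : A ⊆ C := by
      rintro - ⟨t, ⟨ht0, -⟩, rfl⟩
      rcases eq_or_lt_of_le ht0 with h | h
      · subst h
        simpa using h01
      · exact hdiag z hw t h
    have hAconn : IsPreconnected A := by
      apply (isPreconnected_Icc).image
      apply Continuous.continuousOn
      apply continuous_pi
      intro i
      fin_cases i
      · exact (Complex.continuous_ofReal.mul continuous_const)
      · exact continuous_const
    have hwO : (![z, 1] : Fin 2 → ℂ) ∈ O := by
      refine ⟨(y 1)⁻¹, by simpa using inv_ne_zero hy1, ?_⟩
      funext i
      fin_cases i <;> simp [inv_mul_cancel₀ hy1, hz_def]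
    have hwA : (![z, 1] : Fin 2 → ℂ) ∈ A :=
      ⟨1, ⟨zero_le_one, le_refl _⟩, by norm_num⟩
    have h01A : (![(0:ℂ), 1] : Fin 2 → ℂ) ∈ A :=
      ⟨0, ⟨le_refl _, zero_le_one⟩, by norm_num⟩
    exact ⟨O ∪ A, Set.union_subset hOsub hAsub, Or.inr h01A, Or.inl hyO,
      IsPreconnected.union _ hwO hwA hOconn hAconn⟩
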